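/- Under the hypotheses of the main theorem (assumptions (A1), (A2), unpredictable drive solution x(t) with constants ε₀, r and sequences μₙ, νₙ, and generalized synchronization), if the response solution ỹ(t) = y(t+T) is unpredictable with constant ε₁ on intervals [θₙ−r₁, θₙ+r₁] ⊆ [νₙ−T−r, νₙ−T+r], then the combined solution z(t) = (x(t+T), y(t+T)) of the coupled system satisfies: ‖z(t+μₙ) − z(t)‖ → 0 uniformly on compact subsets of ℝ and ‖z(t+μₙ) − z(t)‖ ≥ √(ε₀² + ε₁²) for all t ∈ [θₙ−r₁, θₙ+r₁] and all n; hence z is an unpredictable function. -/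

import Mathlib

open Set Filter

def Unpredictable {E : Type*} [NormedAddCommGroup E] (h : ℝ → E) : Prop :=
  UniformContinuous h ∧
  ∃ ε₀ > (0 : ℝ), ∃ r > (0 : ℝ), ∃ μ ν : ℕ → ℝ,
    Tendsto μ atTop atTop ∧ Tendsto ν atTop atTop ∧
    (∀ C : Set ℝ, IsCompact C → ∀ ε > 0, ∃ N, ∀ n ≥ N, ∀ t ∈ C,
      ‖h (t + μ n) - h t‖ < ε) ∧
    ∀ n, ∀ t ∈ Icc (ν n - r) (ν n + r), ε₀ ≤ ‖h (t + μ n) - h t‖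

theorem combined_solution_unpredictable (p q : ℕ)
    (x : ℝ → EuclideanSpace ℝ (Fin p)) (y : ℝ → EuclideanSpace ℝ (Fin q))
    (T : ℝ)
    (ε₀ ε₁ r r₁ : ℝ) (hε₀ : 0 < ε₀) (hε₁ : 0 < ε₁) (hr : 0 < r) (hr₁ : 0 < r₁)
    (μ ν θ : ℕ → ℝ)
    (hμ : Tendsto μ atTop atTop) (hν : Tendsto ν atTop atTop)
    (hθ : Tendsto θ atTop atTop)
    (hxuc : UniformContinuous x) (hyuc : UniformContinuous y)
    (hxconv : ∀ C : Set ℝ, IsCompact C → ∀ ε > 0, ∃ N, ∀ n ≥ N, ∀ t ∈ C,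
      ‖x (t + T + μ n) - x (t + T)‖ < ε)
    (hyconv : ∀ C : Set ℝ, IsCompact C → ∀ ε > 0, ∃ N, ∀ n ≥ N, ∀ t ∈ C,
      ‖y (t + T + μ n) - y (t + T)‖ < ε)
    (hxsep : ∀ n, ∀ t ∈ Icc (ν n - T - r) (ν n - T + r),
      ε₀ ≤ ‖x (t + T + μ n) - x (t + T)‖)
    (hysep : ∀ n, ∀ t ∈ Icc (θ n - r₁) (θ n + r₁),
      ε₁ ≤ ‖y (t + T + μ n) - y (t + T)‖)
    (hsub : ∀ n, Icc (θ n - r₁) (θ n + r₁) ⊆ Icc (ν n - T - r) (ν n - T + r))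
    (z : ℝ → WithLp 2 (EuclideanSpace ℝ (Fin p) × EuclideanSpace ℝ (Fin q)))
    (hz : ∀ t, z t = (WithLp.equiv 2 _).symm (x (t + T), y (t + T))) :
    (∀ C : Set ℝ, IsCompact C → ∀ ε > 0, ∃ N, ∀ n ≥ N, ∀ t ∈ C,
      ‖z (t + μ n) - z t‖ < ε) ∧
    (∀ n, ∀ t ∈ Icc (θ n - r₁) (θ n + r₁),
      Real.sqrt (ε₀ ^ 2 + ε₁ ^ 2) ≤ ‖z (t + μ n) - z t‖) ∧
    Unpredictable z := by
  have key : ∀ s t : ℝ, ‖z s - z t‖ =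
      Real.sqrt (‖x (s + T) - x (t + T)‖ ^ 2 + ‖y (s + T) - y (t + T)‖ ^ 2) := by
    intro s t
    rw [hz, hz]
    rw [WithLp.prod_norm_eq_of_L2]
    rfl
  have sqrt_pos : 0 < Real.sqrt (ε₀ ^ 2 + ε₁ ^ 2) :=
    Real.sqrt_pos.mpr (by positivity)
  have sq_le : ∀ a b : ℝ, 0 ≤ a → 0 ≤ b → Real.sqrt (a ^ 2 + b ^ 2) ≤ a + b := by
    intro a b ha hb
    have h : a ^ 2 + b ^ 2 ≤ (a + b) ^ 2 := by nlinarith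
    calc Real.sqrt (a ^ 2 + b ^ 2) ≤ Real.sqrt ((a + b) ^ 2) := Real.sqrt_le_sqrt h
      _ = a + b := Real.sqrt_sq (by positivity)
  have hconv : ∀ C : Set ℝ, IsCompact C → ∀ ε > 0, ∃ N, ∀ n ≥ N, ∀ t ∈ C,
      ‖z (t + μ n) - z t‖ < ε := by
    intro C hC ε hε
    obtain ⟨N₁, hN₁⟩ := hxconv C hC (ε / 2) (by positivity)
    obtain ⟨N₂, hN₂⟩ := hyconv C hC (ε / 2) (by positivity)
    refine ⟨max N₁ N₂, fun n hn t ht => ?_⟩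
    have hx := hN₁ n (le_trans (le_max_left _ _) hn) t ht
    have hy := hN₂ n (le_trans (le_max_right _ _) hn) t ht
    rw [key, show t + μ n + T = t + T + μ n by ring]
    calc Real.sqrt (‖x (t + T + μ n) - x (t + T)‖ ^ 2 + ‖y (t + T + μ n) - y (t + T)‖ ^ 2)
        ≤ ‖x (t + T + μ n) - x (t + T)‖ + ‖y (t + T + μ n) - y (t + T)‖ :=
          sq_le _ _ (norm_nonneg _) (norm_nonneg _)
      _ < ε / 2 + ε / 2 := add_lt_add hx hy
      _ = ε := by ring
  have hsep2 : ∀ n : ℕ, ∀ t ∈ Icc (θ n - r₁) (θ n + r₁),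
      Real.sqrt (ε₀ ^ 2 + ε₁ ^ 2) ≤ ‖z (t + μ n) - z t‖ := by
    intro n t ht
    rw [key, show t + μ n + T = t + T + μ n by ring]
    apply Real.sqrt_le_sqrt
    have hx := hxsep n t (hsub n ht)
    have hy := hysep n t ht
    nlinarith
  have huc : UniformContinuous z := by
    have : z = fun t => (WithLp.equiv 2 _).symm (x (t + T), y (t + T)) := funext hz
    rw [this]
    have h1 : UniformContinuous fun t : ℝ => (x (t + T), y (t + T)) :=
      (hxuc.comp (uniformContinuous_id.add uniformContinuous_const)).prodMk
        (hyuc.comp (uniformContinuous_id.add uniformContinuous_const))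
    exact UniformContinuous.comp (WithLp.prod_uniformContinuous_toLp 2 _ _) h1
  exact ⟨hconv, hsep2, huc, Real.sqrt (ε₀ ^ 2 + ε₁ ^ 2), sqrt_pos, r₁, hr₁, μ, θ, hμ, hθ,
    hconv, hsep2⟩
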